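/- arXiv:2006.04429 — 2 statements merged into one kernel-verified Lean document; each statement's English description precedes it below -/
import Mathlib

section
/- Let f be a convex differentiable function on R^d attaining its minimum f* at x*. Consider iterates x_{k+1} = x_k - η_k g_k where g_k is an unbiased stochastic gradient at x_k (E[g_k | x_1,...,x_k] = ∇f(x_k)) with E[‖g_k‖² | x_1,...,x_k] ≤ m_k², and η_k > 0 deterministic. Then the weighted average x̄_T = (Σ_{k=1}^T η_k x_k)/(Σ_{k=1}^T η_k) satisfies E[f(x̄_T) - f*] ≤ (‖x_1 - x*‖² + Σ_{k=1}^T η_k² m_k²)/(Σ_{k=1}^T η_k). -/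
open MeasureTheory Finset RealInnerProductSpace

lemma grad_ineq {E : Type*} [NormedAddCommGroup E] [InnerProductSpace ℝ E] [CompleteSpace E]
    {f : E → ℝ} (hconv : ConvexOn ℝ Set.univ f) (hdiff : Differentiable ℝ f) (x y : E) :
    f x + ⟪gradient f x, y - x⟫ ≤ f y := by
  have hgrad : HasFDerivAt f ((InnerProductSpace.toDual ℝ E) (gradient f x)) x :=
    hasGradientAt_iff_hasFDerivAt.mp (hdiff x).hasGradientAt
  set A := AffineMap.lineMap (k := ℝ) x y with hA
  have hc0 : A 0 = x := by simp [hA]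
  have hc1 : A 1 = y := by simp [hA]
  have hcderiv : HasDerivAt (fun t : ℝ => A t) (y - x) 0 := by
    have : (fun t : ℝ => A t) = fun t : ℝ => t • (y - x) + x := by
      funext t; simp [hA, AffineMap.lineMap_apply_module]; module
    rw [this]
    simpa using ((hasDerivAt_id (0:ℝ)).smul_const (y - x)).add_const x
  have hφ : HasDerivAt (fun t : ℝ => f (A t)) (⟪gradient f x, y - x⟫) 0 := by
    have h := HasFDerivAt.comp_hasDerivAt 0 (by rw [hc0] at *; exact hgrad) hcderiv
    exact h
  have hφc : ConvexOn ℝ Set.univ (fun t : ℝ => f (A t)) := by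
    have := hconv.comp_affineMap A
    exact this
  have hs := hφc.le_slope_of_hasDerivAt (Set.mem_univ (0:ℝ)) (Set.mem_univ (1:ℝ)) one_pos hφ
  rw [slope_def_field] at hs
  simp only [hc0, hc1, sub_zero, div_one] at hs
  linarith

lemma condexp_clm {α : Type*} {m m0 : MeasurableSpace α} {μ : Measure α} [IsFiniteMeasure μ]
    (hm : m ≤ m0) {E F : Type*} [NormedAddCommGroup E] [NormedSpace ℝ E] [CompleteSpace E]
    [NormedAddCommGroup F] [NormedSpace ℝ F] [CompleteSpace F]
    (T : E →L[ℝ] F) {g : α → E} (hg : Integrable g μ) :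
    (fun ω => T (condExp m μ g ω)) =ᵐ[μ] condExp m μ (fun ω => T (g ω)) := by
  refine ae_eq_condExp_of_forall_setIntegral_eq hm (T.integrable_comp hg) ?_ ?_ ?_
  · exact fun s _ _ => (T.integrable_comp integrable_condExp).integrableOn
  · intro s hs hμs
    rw [T.integral_comp_comm integrable_condExp.integrableOn,
      setIntegral_condExp hm hg hs, T.integral_comp_comm hg.integrableOn]
  · exact StronglyMeasurable.aestronglyMeasurable
      (T.continuous.comp_stronglyMeasurable stronglyMeasurable_condExp)

lemma int_inner_of_L2 {α : Type*} {m0 : MeasurableSpace α} {μ : Measure α}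
    {E : Type*} [NormedAddCommGroup E] [InnerProductSpace ℝ E]
    {h g : α → E} (hh : MemLp h 2 μ) (hg : MemLp g 2 μ) :
    Integrable (fun ω => ⟪h ω, g ω⟫) μ := by
  have hi : Integrable (fun ω => (‖h ω‖ ^ 2 + ‖g ω‖ ^ 2) / 2) μ := by
    refine (Integrable.add ?_ ?_).div_const 2
    · exact (memLp_two_iff_integrable_sq_norm hh.1).mp hh
    · exact (memLp_two_iff_integrable_sq_norm hg.1).mp hg
  refine hi.mono' (hh.1.inner hg.1) (Filter.Eventually.of_forall fun ω => ?_)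
  calc ‖⟪h ω, g ω⟫‖ ≤ ‖h ω‖ * ‖g ω‖ := norm_inner_le_norm _ _
    _ ≤ (‖h ω‖ ^ 2 + ‖g ω‖ ^ 2) / 2 := by nlinarith [sq_nonneg (‖h ω‖ - ‖g ω‖)]

lemma coord_le {d : ℕ} (a : EuclideanSpace ℝ (Fin d)) (i : Fin d) : |a i| ≤ ‖a‖ := by
  rw [EuclideanSpace.norm_eq]
  calc |a i| = Real.sqrt (‖a i‖ ^ 2) := by
        rw [Real.sqrt_sq (norm_nonneg _), Real.norm_eq_abs]
    _ ≤ Real.sqrt (∑ j, ‖a j‖ ^ 2) :=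
        Real.sqrt_le_sqrt (Finset.single_le_sum (f := fun j => ‖a j‖ ^ 2)
          (fun j _ => sq_nonneg _) (Finset.mem_univ i))

lemma euclid_inner_eq {d : ℕ} (a b : EuclideanSpace ℝ (Fin d)) :
    ⟪a, b⟫ = ∑ i, a i * b i := by
  simp [PiLp.inner_apply, RCLike.inner_apply, conj_trivial]
  exact Finset.sum_congr rfl fun i _ => mul_comm _ _

/-- Pull-out of conditional expectation inside an inner product. -/
lemma swap_inner {d : ℕ} {Ω : Type*} {m0 : MeasurableSpace Ω} {μ : Measure Ω}
    [IsProbabilityMeasure μ] {m : MeasurableSpace Ω} (hm : m ≤ m0)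
    {h g G : Ω → EuclideanSpace ℝ (Fin d)}
    (hh2 : MemLp h 2 μ) (hhm : StronglyMeasurable[m] h)
    (hgint : Integrable g μ) (hg2 : MemLp g 2 μ)
    (hG : condExp m μ g =ᵐ[μ] G) :
    Integrable (fun ω => ⟪h ω, G ω⟫) μ ∧
      ∫ ω, ⟪h ω, g ω⟫ ∂μ = ∫ ω, ⟪h ω, G ω⟫ ∂μ := by
  have hbound : Integrable (fun ω => (‖h ω‖ ^ 2 + ‖g ω‖ ^ 2) / 2) μ := by
    refine (Integrable.add ?_ ?_).div_const 2
    · exact (memLp_two_iff_integrable_sq_norm hh2.1).mp hh2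
    · exact (memLp_two_iff_integrable_sq_norm hg2.1).mp hg2
  have hsm_i : ∀ i : Fin d, StronglyMeasurable[m] (fun ω => h ω i) := fun i =>
    (EuclideanSpace.proj (𝕜 := ℝ) i).continuous.comp_stronglyMeasurable hhm
  have hint_gi : ∀ i : Fin d, Integrable (fun ω => g ω i) μ := fun i =>
    (EuclideanSpace.proj (𝕜 := ℝ) i).integrable_comp hgint
  have hint_prod : ∀ i : Fin d, Integrable (fun ω => h ω i * g ω i) μ := by
    intro i
    refine hbound.mono' (((hsm_i i).mono hm).aestronglyMeasurable.mul (hint_gi i).1)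
      (Filter.Eventually.of_forall fun ω => ?_)
    have h1 : |h ω i| ≤ ‖h ω‖ := coord_le _ i
    have h2 : |g ω i| ≤ ‖g ω‖ := coord_le _ i
    calc ‖h ω i * g ω i‖ = |h ω i| * |g ω i| := by rw [Real.norm_eq_abs, abs_mul]
      _ ≤ ‖h ω‖ * ‖g ω‖ := by
          exact mul_le_mul h1 h2 (abs_nonneg _) (le_trans (abs_nonneg _) h1)
      _ ≤ (‖h ω‖ ^ 2 + ‖g ω‖ ^ 2) / 2 := by nlinarith [sq_nonneg (‖h ω‖ - ‖g ω‖)]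
  have step : ∀ i : Fin d,
      condExp m μ (fun ω => h ω i * g ω i) =ᵐ[μ]
        fun ω => h ω i * condExp m μ (fun ω => g ω i) ω := by
    intro i
    have := condExp_mul_of_stronglyMeasurable_left (μ := μ) (hsm_i i) ?_ (hint_gi i)
    · exact this
    · exact (hint_prod i)
  have stepG : ∀ i : Fin d,
      condExp m μ (fun ω => g ω i) =ᵐ[μ] fun ω => G ω i := by
    intro i
    have h1 := (condexp_clm hm (EuclideanSpace.proj (𝕜 := ℝ) i) hgint).symm
    refine h1.trans (hG.mono fun ω hω => ?_)
    simp only [hω]; rfl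
  have combined : ∀ i : Fin d,
      condExp m μ (fun ω => h ω i * g ω i) =ᵐ[μ] fun ω => h ω i * G ω i := by
    intro i
    refine (step i).trans ((stepG i).mono fun ω hω => ?_)
    simp only [hω]
  have intG_i : ∀ i : Fin d, Integrable (fun ω => h ω i * G ω i) μ := fun i =>
    integrable_condExp.congr (combined i)
  have int_eq_i : ∀ i : Fin d,
      ∫ ω, h ω i * g ω i ∂μ = ∫ ω, h ω i * G ω i ∂μ := by
    intro i
    rw [← integral_condExp hm (f := fun ω => h ω i * g ω i)]
    exact integral_congr_ae (combined i)
  constructor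
  · have : (fun ω => ⟪h ω, G ω⟫) = fun ω => ∑ i, h ω i * G ω i := by
      funext ω; exact euclid_inner_eq _ _
    rw [this]
    exact integrable_finset_sum _ fun i _ => intG_i i
  · have e1 : (fun ω => ⟪h ω, g ω⟫) = fun ω => ∑ i, h ω i * g ω i := by
      funext ω; exact euclid_inner_eq _ _
    have e2 : (fun ω => ⟪h ω, G ω⟫) = fun ω => ∑ i, h ω i * G ω i := by
      funext ω; exact euclid_inner_eq _ _
    rw [e1, e2, integral_finset_sum _ fun i _ => hint_prod i,
      integral_finset_sum _ fun i _ => intG_i i]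
    exact Finset.sum_congr rfl fun i _ => int_eq_i i

/-- Weighted-average convergence bound for SGD on a convex function under
nonstationary second-moment noise. -/
theorem stmt_0 {d : ℕ} {Ω : Type*} [MeasurableSpace Ω] {μ : Measure Ω}
    [IsProbabilityMeasure μ]
    (f : EuclideanSpace ℝ (Fin d) → ℝ) (xstar x₁ : EuclideanSpace ℝ (Fin d))
    (hconv : ConvexOn ℝ Set.univ f) (hdiff : Differentiable ℝ f)
    (hmin : ∀ y, f xstar ≤ f y)
    (T : ℕ) (hT : 1 ≤ T)
    (η m : ℕ → ℝ) (hη : ∀ k, 0 < η k)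
    (x g : ℕ → Ω → EuclideanSpace ℝ (Fin d))
    (ℱ : ℕ → MeasurableSpace Ω) (hℱ : ∀ k, ℱ k ≤ ‹MeasurableSpace Ω›)
    (hadapted : ∀ k, Measurable[ℱ k] (x k))
    (hx₁ : ∀ ω, x 1 ω = x₁)
    (hupdate : ∀ k ω, x (k + 1) ω = x k ω - η k • g k ω)
    (hint : ∀ k, Integrable (g k) μ)
    (hint2 : ∀ k, Integrable (fun ω => ‖g k ω‖ ^ 2) μ)
    (hunbiased : ∀ k, μ[g k | ℱ k] =ᵐ[μ] fun ω => gradient f (x k ω))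
    (hmoment : ∀ k, μ[fun ω => ‖g k ω‖ ^ 2 | ℱ k] ≤ᵐ[μ] fun _ => (m k) ^ 2)
    (xbar : Ω → EuclideanSpace ℝ (Fin d))
    (hxbar : ∀ ω, xbar ω = (∑ k ∈ Icc 1 T, η k)⁻¹ • ∑ k ∈ Icc 1 T, η k • x k ω) :
    (∫ ω, f (xbar ω) ∂μ) - f xstar ≤
      (‖x₁ - xstar‖ ^ 2 + ∑ k ∈ Icc 1 T, (η k) ^ 2 * (m k) ^ 2) / ∑ k ∈ Icc 1 T, η k := by
  classical
  have hne : (Icc 1 T).Nonempty := ⟨1, by simp [mem_Icc]; omega⟩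
  set S := ∑ k ∈ Icc 1 T, η k with hSdef
  have hS0 : 0 < S := Finset.sum_pos (fun k _ => hη k) hne
  have hmeas : ∀ k, Measurable (x k) := fun k => (hadapted k).mono (hℱ k) le_rfl
  have hgL2 : ∀ k, MemLp (g k) 2 μ := fun k =>
    (memLp_two_iff_integrable_sq_norm (hint k).1).mpr (hint2 k)
  have hxL2 : ∀ k, 1 ≤ k → MemLp (x k) 2 μ := by
    intro k hk
    induction k, hk using Nat.le_induction with
    | base =>
        have hx : x 1 = fun _ => x₁ := funext hx₁
        rw [hx]; exact memLp_const x₁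
    | succ n hn ih =>
        have hx : x (n + 1) = fun ω => x n ω - η n • g n ω := funext (hupdate n)
        rw [hx]
        exact ih.sub ((hgL2 n).const_smul (η n))
  have hdev : ∀ k, 1 ≤ k → MemLp (fun ω => x k ω - xstar) 2 μ := fun k hk =>
    (hxL2 k hk).sub (memLp_const xstar)
  have hdevm : ∀ k, StronglyMeasurable[ℱ k] (fun ω => x k ω - xstar) := fun k =>
    ((hadapted k).sub measurable_const).stronglyMeasurable
  have hswap : ∀ k, 1 ≤ k →
      Integrable (fun ω => ⟪x k ω - xstar, gradient f (x k ω)⟫) μ ∧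
      ∫ ω, ⟪x k ω - xstar, g k ω⟫ ∂μ = ∫ ω, ⟪x k ω - xstar, gradient f (x k ω)⟫ ∂μ :=
    fun k hk => swap_inner (hℱ k) (hdev k hk) (hdevm k) (hint k) (hgL2 k) (hunbiased k)
  have hCk : ∀ k, 1 ≤ k → Integrable (fun ω => ⟪x k ω - xstar, g k ω⟫) μ := fun k hk =>
    int_inner_of_L2 (hdev k hk) (hgL2 k)
  have hDk : ∀ k (ω : Ω), f (x k ω) - f xstar ≤ ⟪x k ω - xstar, gradient f (x k ω)⟫ := by
    intro k ω
    have h := grad_ineq hconv hdiff (x k ω) xstar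
    have heq : ⟪gradient f (x k ω), xstar - x k ω⟫
        = -⟪x k ω - xstar, gradient f (x k ω)⟫ := by
      rw [← neg_sub (x k ω) xstar, inner_neg_right, real_inner_comm]
    rw [heq] at h; linarith
  have hfint : ∀ k, 1 ≤ k → Integrable (fun ω => f (x k ω) - f xstar) μ := by
    intro k hk
    refine ((hswap k hk).1.abs).mono' ?_ (Filter.Eventually.of_forall fun ω => ?_)
    · exact ((hdiff.continuous.measurable.comp (hmeas k)).sub
        measurable_const).aestronglyMeasurable
    · rw [Real.norm_eq_abs, abs_of_nonneg (by linarith [hmin (x k ω)])]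
      exact le_trans (hDk k ω) (le_abs_self _)
  set F : ℕ → ℝ := fun k => ∫ ω, (f (x k ω) - f xstar) ∂μ with hFdef
  have hF0 : ∀ k, 0 ≤ F k := fun k => integral_nonneg fun ω => sub_nonneg.mpr (hmin _)
  have hFle : ∀ k, 1 ≤ k → F k ≤ ∫ ω, ⟪x k ω - xstar, g k ω⟫ ∂μ := by
    intro k hk
    rw [(hswap k hk).2]
    exact integral_mono (hfint k hk) (hswap k hk).1 fun ω => hDk k ω
  have hM : ∀ k, ∫ ω, ‖g k ω‖ ^ 2 ∂μ ≤ m k ^ 2 := by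
    intro k
    rw [← integral_condExp (hℱ k) (f := fun ω => ‖g k ω‖ ^ 2)]
    calc ∫ ω, (μ[fun ω => ‖g k ω‖ ^ 2|ℱ k]) ω ∂μ
        ≤ ∫ _ω, (m k) ^ 2 ∂μ :=
          integral_mono_ae integrable_condExp (integrable_const _) (hmoment k)
      _ = (m k) ^ 2 := by simp
  set Err : ℕ → ℝ := fun k => ∫ ω, ‖x k ω - xstar‖ ^ 2 ∂μ with hEdef
  have hstep : ∀ k, 1 ≤ k → Err (k + 1) ≤ Err k - 2 * η k * F k + η k ^ 2 * m k ^ 2 := by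
    intro k hk
    have hA : Integrable (fun ω => ‖x k ω - xstar‖ ^ 2) μ :=
      (memLp_two_iff_integrable_sq_norm (hdev k hk).1).mp (hdev k hk)
    have hB := hCk k hk
    have hC := hint2 k
    have hpt : ∀ ω, ‖x (k+1) ω - xstar‖ ^ 2
        = ‖x k ω - xstar‖ ^ 2 - 2 * η k * ⟪x k ω - xstar, g k ω⟫
          + η k ^ 2 * ‖g k ω‖ ^ 2 := by
      intro ω
      have hx : x (k+1) ω - xstar = (x k ω - xstar) - η k • g k ω := by
        rw [hupdate k ω]; abel
      rw [hx, norm_sub_sq_real, real_inner_smul_right, norm_smul, Real.norm_eq_abs,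
        mul_pow, sq_abs]
      ring
    have hval : Err (k+1) = Err k - 2 * η k * (∫ ω, ⟪x k ω - xstar, g k ω⟫ ∂μ)
        + η k ^ 2 * ∫ ω, ‖g k ω‖ ^ 2 ∂μ := by
      simp only [hEdef]
      have hAB : Integrable
          (fun ω => ‖x k ω - xstar‖ ^ 2 - 2 * η k * ⟪x k ω - xstar, g k ω⟫) μ :=
        hA.sub (hB.const_mul _)
      have hCc : Integrable (fun ω => η k ^ 2 * ‖g k ω‖ ^ 2) μ := hC.const_mul _
      rw [integral_congr_ae (Filter.Eventually.of_forall hpt),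
        integral_add hAB hCc, integral_sub hA (hB.const_mul _),
        integral_const_mul, integral_const_mul]
    rw [hval]
    have h1 : F k ≤ ∫ ω, ⟪x k ω - xstar, g k ω⟫ ∂μ := hFle k hk
    have h2 := hM k
    nlinarith [mul_le_mul_of_nonneg_left h2 (sq_nonneg (η k)),
      mul_le_mul_of_nonneg_left h1 (by linarith [hη k] : (0:ℝ) ≤ 2 * η k)]
  have htel : ∀ n, Err (n + 1) ≤ Err 1 - 2 * ∑ k ∈ Icc 1 n, η k * F k
      + ∑ k ∈ Icc 1 n, η k ^ 2 * m k ^ 2 := by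
    intro n
    induction n with
    | zero => simp
    | succ p ih =>
        have h1 := hstep (p + 1) (by omega)
        rw [Finset.sum_Icc_succ_top (by omega : 1 ≤ p + 1),
          Finset.sum_Icc_succ_top (by omega : 1 ≤ p + 1)]
        linarith
  have hE1 : Err 1 = ‖x₁ - xstar‖ ^ 2 := by
    simp only [hEdef]
    have hx : (fun ω => ‖x 1 ω - xstar‖ ^ 2) = fun _ω => ‖x₁ - xstar‖ ^ 2 := by
      funext ω; rw [hx₁]
    rw [hx]; simp
  have hpos : 0 ≤ Err (T + 1) := integral_nonneg fun ω => sq_nonneg _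
  have hsumF : ∑ k ∈ Icc 1 T, η k * F k
      ≤ ‖x₁ - xstar‖ ^ 2 + ∑ k ∈ Icc 1 T, η k ^ 2 * m k ^ 2 := by
    have h := htel T
    rw [hE1] at h
    have hge : 0 ≤ ∑ k ∈ Icc 1 T, η k * F k :=
      Finset.sum_nonneg fun k _ => mul_nonneg (hη k).le (hF0 k)
    linarith
  have hJ : ∀ ω, f (xbar ω) ≤ S⁻¹ * ∑ k ∈ Icc 1 T, η k * f (x k ω) := by
    intro ω
    have h := hconv.map_centerMass_le (t := Icc 1 T) (w := η) (p := fun k => x k ω)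
      (fun i _ => (hη i).le) hS0 (fun i _ => Set.mem_univ _)
    simp only [Finset.centerMass, smul_eq_mul, Function.comp] at h
    rw [hxbar ω]
    exact h
  have hxbarm : Measurable xbar := by
    rw [funext hxbar]
    exact (Finset.measurable_sum _ fun k _ => (hmeas k).const_smul (η k)).const_smul S⁻¹
  have hintf : ∀ k, 1 ≤ k → Integrable (fun ω => f (x k ω)) μ := fun k hk =>
    ((hfint k hk).add (integrable_const (f xstar))).congr
      (Filter.Eventually.of_forall fun ω => by simp)
  have hupper : Integrable (fun ω => S⁻¹ * ∑ k ∈ Icc 1 T, η k * f (x k ω) - f xstar) μ := by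
    refine Integrable.sub (Integrable.const_mul ?_ _) (integrable_const _)
    exact integrable_finset_sum _ fun k hk =>
      (hintf k (mem_Icc.mp hk).1).const_mul (η k)
  have hfxbar_int : Integrable (fun ω => f (xbar ω) - f xstar) μ := by
    refine hupper.mono' (((hdiff.continuous.measurable.comp hxbarm).sub
      measurable_const).aestronglyMeasurable) (Filter.Eventually.of_forall fun ω => ?_)
    rw [Real.norm_eq_abs, abs_of_nonneg (by linarith [hmin (xbar ω)])]
    have := hJ ω; linarith
  have hintxbar : Integrable (fun ω => f (xbar ω)) μ :=
    (hfxbar_int.add (integrable_const (f xstar))).congr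
      (Filter.Eventually.of_forall fun ω => by simp)
  have hFk : ∀ k, 1 ≤ k → ∫ ω, f (x k ω) ∂μ = F k + f xstar := by
    intro k hk
    simp only [hFdef]
    rw [integral_sub (hintf k hk) (integrable_const _), integral_const]
    simp
  have hkey : ∫ ω, (f (xbar ω) - f xstar) ∂μ ≤ S⁻¹ * ∑ k ∈ Icc 1 T, η k * F k := by
    have h1 : ∫ ω, (f (xbar ω) - f xstar) ∂μ
        ≤ ∫ ω, (S⁻¹ * ∑ k ∈ Icc 1 T, η k * f (x k ω) - f xstar) ∂μ :=
      integral_mono hfxbar_int hupper fun ω => by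
        simp only []; linarith [hJ ω]
    refine h1.trans (le_of_eq ?_)
    rw [integral_sub (Integrable.const_mul (integrable_finset_sum _ fun k hk =>
        (hintf k (mem_Icc.mp hk).1).const_mul (η k)) _) (integrable_const _),
      integral_const, integral_const_mul,
      integral_finset_sum _ (fun k hk => (hintf k (mem_Icc.mp hk).1).const_mul (η k))]
    have hterm : ∀ k ∈ Icc 1 T, ∫ ω, η k * f (x k ω) ∂μ = η k * (F k + f xstar) :=
      fun k hk => by rw [integral_const_mul, hFk k (mem_Icc.mp hk).1]
    rw [Finset.sum_congr rfl hterm]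
    have hsplit : ∑ k ∈ Icc 1 T, η k * (F k + f xstar)
        = (∑ k ∈ Icc 1 T, η k * F k) + S * f xstar := by
      simp [mul_add, Finset.sum_add_distrib, ← Finset.sum_mul, hSdef]
    rw [hsplit, mul_add, ← mul_assoc, inv_mul_cancel₀ hS0.ne', one_mul]
    simp
  have hfin : ∫ ω, (f (xbar ω) - f xstar) ∂μ = (∫ ω, f (xbar ω) ∂μ) - f xstar := by
    rw [integral_sub hintxbar (integrable_const _), integral_const]
    simp
  rw [← hfin, div_eq_inv_mul]
  refine hkey.trans ?_
  exact mul_le_mul_of_nonneg_left hsumF (inv_nonneg.mpr hS0.le)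
end

section
/- Let m̂_k, m_k, m > 0 be reals for k = 1,...,T. Then Σ_{k=1}^T 1/(m̂_k + m) ≥ (1/2)Σ_{k=1}^T 1/(m_k + m) - (1/(2m³))Σ_{k=1}^T ((m̂_k - m_k)_+)², where (x)_+ = max(x,0). -/
open Finset

lemma term_bound (a b m : ℝ) (ha : 0 < a) (hb : 0 < b) (hm : 0 < m) :
    (1/2) * (1 / (b + m)) - (1 / (2 * m ^ 3)) * (max (a - b) 0) ^ 2 ≤ 1 / (a + m) := by
  have ham : 0 < a + m := by linarith
  have hbm : 0 < b + m := by linarith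
  have hm3 : 0 < m ^ 3 := by positivity
  rcases le_or_gt a b with h | h
  · have : max (a - b) 0 = 0 := max_eq_right (by linarith)
    rw [this]
    have h1 : 1 / (a + m) ≥ 1 / (b + m) := by
      apply one_div_le_one_div_of_le ham (by linarith)
    nlinarith [one_div_pos.mpr hbm]
  · have : max (a - b) 0 = a - b := max_eq_left (by linarith)
    rw [this]
    rw [show (1:ℝ)/2*(1/(b+m)) - 1/(2*m^3)*(a-b)^2 = (m^3 - (a-b)^2*(b+m))/(2*m^3*(b+m)) by
      field_simp, div_le_div_iff₀ (by positivity) ham]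
    have hd : 0 < a - b := by linarith
    nlinarith [mul_nonneg hb.le (add_nonneg (pow_nonneg hd.le 3) (pow_nonneg hm.le 3)),
      mul_nonneg hm.le (mul_nonneg (by linarith : (0:ℝ) ≤ (a-b)+m) (sq_nonneg (a-b-m))),
      sq_nonneg ((a-b)*(b+m)), mul_nonneg (mul_nonneg hm.le hm.le) (sq_nonneg (a-b))]

/-- Lower bound on the sum of adaptive inverse stepsizes in terms of the true noise
levels and the estimation error. -/
theorem stmt_9 (T : ℕ) (mhat mk : ℕ → ℝ) (m : ℝ)
    (hmhat : ∀ k ∈ Icc 1 T, 0 < mhat k) (hmk : ∀ k ∈ Icc 1 T, 0 < mk k) (hm : 0 < m) :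
    (1 / 2) * ∑ k ∈ Icc 1 T, 1 / (mk k + m)
      - (1 / (2 * m ^ 3)) * ∑ k ∈ Icc 1 T, (max (mhat k - mk k) 0) ^ 2
    ≤ ∑ k ∈ Icc 1 T, 1 / (mhat k + m) := by
  rw [Finset.mul_sum, Finset.mul_sum, ← Finset.sum_sub_distrib]
  apply Finset.sum_le_sum
  intro k hk
  exact term_bound (mhat k) (mk k) m (hmhat k hk) (hmk k hk) hm
end
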